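/- Let x, y ∈ ℂⁿ be unit vectors. There exists a complex skew-symmetric matrix R with ‖R‖ ≤ 1 (spectral norm) such that y*Rx = √(1 − |xᵀy|²). -/

import Mathlib

open Matrix

/-- The spectral (operator 2-) norm of a complex matrix. -/
noncomputable def specNorm {n : ℕ} (A : Matrix (Fin n) (Fin n) ℂ) : ℝ :=
  ‖Matrix.toEuclideanCLM (𝕜 := ℂ) A‖

theorem skew_symmetric_attainability {n : ℕ} (x y : EuclideanSpace ℂ (Fin n))
    (hx : ‖x‖ = 1) (hy : ‖y‖ = 1) :
    ∃ R : Matrix (Fin n) (Fin n) ℂ, Rᵀ = -R ∧ specNorm R ≤ 1 ∧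
      star (y : Fin n → ℂ) ⬝ᵥ R.mulVec (x : Fin n → ℂ) =
        (Real.sqrt (1 - ‖(x : Fin n → ℂ) ⬝ᵥ (y : Fin n → ℂ)‖ ^ 2) : ℂ) := by
  classical
  set X : Fin n → ℂ := (x : Fin n → ℂ) with hX
  set Y : Fin n → ℂ := (y : Fin n → ℂ) with hY
  set c : ℂ := X ⬝ᵥ Y with hc
  have hxx : ∑ i, (starRingEnd ℂ) (X i) * X i = 1 := by
    have h := inner_self_eq_norm_sq_to_K (𝕜 := ℂ) x
    rw [hx, PiLp.inner_apply] at h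
    simpa [hX, Complex.conj_mul'] using h
  have hyy : ∑ i, (starRingEnd ℂ) (Y i) * Y i = 1 := by
    have h := inner_self_eq_norm_sq_to_K (𝕜 := ℂ) y
    rw [hy, PiLp.inner_apply] at h
    simpa [hY, Complex.conj_mul'] using h
  have habs : ‖c‖ ≤ 1 := by
    set xs : EuclideanSpace ℂ (Fin n) := (WithLp.equiv 2 (Fin n → ℂ)).symm (star X) with hxs
    have hxsnorm : ‖xs‖ = 1 := by
      rw [EuclideanSpace.norm_eq] at hx ⊢
      rw [← hx]
      congr 1
      refine Finset.sum_congr rfl fun i _ => ?_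
      simp [hxs, hX]
    have hinner : (inner ℂ xs y : ℂ) = c := by
      rw [PiLp.inner_apply]
      simp only [hxs, hc, dotProduct]
      refine Finset.sum_congr rfl fun i _ => ?_
      simp [mul_comm, hY]
    calc ‖c‖ = ‖(inner ℂ xs y : ℂ)‖ := by rw [hinner]
      _ ≤ ‖xs‖ * ‖y‖ := norm_inner_le_norm xs y
      _ = 1 := by rw [hxsnorm, hy]; ring
  set s : ℝ := 1 - ‖c‖ ^ 2 with hs
  have hs0 : 0 ≤ s := by
    have : ‖c‖ ^ 2 ≤ 1 := by nlinarith [norm_nonneg c]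
    rw [hs]; linarith
  have hSc : 1 - (starRingEnd ℂ) c * c = (s : ℂ) := by
    have h1 : (starRingEnd ℂ) c * c = ((‖c‖ ^ 2 : ℝ) : ℂ) := by
      rw [← Complex.normSq_eq_norm_sq, ← Complex.normSq_eq_conj_mul_self]
    rw [h1, hs]
    push_cast
    ring
  rcases eq_or_lt_of_le hs0 with hzero | hpos
  · refine ⟨0, by simp, ?_, ?_⟩
    · rw [specNorm, map_zero, norm_zero]; exact zero_le_one
    · rw [Matrix.zero_mulVec, dotProduct_zero, ← hzero]
      simp
  · set t : ℝ := (Real.sqrt s)⁻¹ with ht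
    have hst : Real.sqrt s > 0 := Real.sqrt_pos.2 hpos
    have hts : t * s = Real.sqrt s := by
      rw [ht]
      rw [inv_mul_eq_div, eq_comm, eq_div_iff hst.ne']
      exact Real.mul_self_sqrt hs0
    have hts2 : ((t ^ 2 * s : ℝ) : ℂ) = 1 := by
      have hr : t ^ 2 * s = 1 := by
        rw [ht, inv_pow, Real.sq_sqrt hs0, inv_mul_cancel₀ hpos.ne']
      rw [hr]; norm_num
    set b : Fin n → ℂ := fun i => (t : ℂ) * ((starRingEnd ℂ) (X i) - (starRingEnd ℂ) c * Y i)
      with hb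
    have hXY : ∑ j, Y j * X j = c := by
      rw [hc, dotProduct]
      exact Finset.sum_congr rfl fun j _ => mul_comm _ _
    have hXYc : ∑ i, (starRingEnd ℂ) (Y i) * (starRingEnd ℂ) (X i) = (starRingEnd ℂ) c := by
      rw [hc, dotProduct, map_sum]
      refine Finset.sum_congr rfl fun i _ => ?_
      rw [RingHom.map_mul]; ring
    have hS2 : ∑ j, b j * X j = (Real.sqrt s : ℂ) := by
      calc ∑ j, b j * X j
          = ∑ j, ((t : ℂ) * ((starRingEnd ℂ) (X j) * X j)
              - (t : ℂ) * (starRingEnd ℂ) c * (Y j * X j)) := by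
            refine Finset.sum_congr rfl fun j _ => ?_; rw [hb]; ring
        _ = (t : ℂ) * (∑ j, (starRingEnd ℂ) (X j) * X j)
              - (t : ℂ) * (starRingEnd ℂ) c * (∑ j, Y j * X j) := by
            rw [Finset.sum_sub_distrib, Finset.mul_sum, Finset.mul_sum]
        _ = (Real.sqrt s : ℂ) := by
            rw [hxx, hXY, ← hts]
            push_cast
            linear_combination (t : ℂ) * hSc
    have hS3 : ∑ i, (starRingEnd ℂ) (Y i) * b i = 0 := by
      calc ∑ i, (starRingEnd ℂ) (Y i) * b i
          = ∑ i, ((t : ℂ) * ((starRingEnd ℂ) (Y i) * (starRingEnd ℂ) (X i))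
              - (t : ℂ) * (starRingEnd ℂ) c * ((starRingEnd ℂ) (Y i) * Y i)) := by
            refine Finset.sum_congr rfl fun i _ => ?_; rw [hb]; ring
        _ = (t : ℂ) * (∑ i, (starRingEnd ℂ) (Y i) * (starRingEnd ℂ) (X i))
              - (t : ℂ) * (starRingEnd ℂ) c * (∑ i, (starRingEnd ℂ) (Y i) * Y i) := by
            rw [Finset.sum_sub_distrib, Finset.mul_sum, Finset.mul_sum]
        _ = 0 := by rw [hXYc, hyy]; ring
    have hXYc2 : ∑ i, (starRingEnd ℂ) (X i) * (starRingEnd ℂ) (Y i) = (starRingEnd ℂ) c := by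
      rw [← hXYc]
      exact Finset.sum_congr rfl fun i _ => mul_comm _ _
    have hXYb : ∑ i, X i * Y i = c := by rw [hc, dotProduct]
    have hbb : ∑ i, (starRingEnd ℂ) (b i) * b i = 1 := by
      calc ∑ i, (starRingEnd ℂ) (b i) * b i
          = ∑ i, ((t : ℂ) ^ 2 * ((starRingEnd ℂ) (X i) * X i)
              - (t : ℂ) ^ 2 * (starRingEnd ℂ) c * (X i * Y i)
              - (t : ℂ) ^ 2 * c * ((starRingEnd ℂ) (X i) * (starRingEnd ℂ) (Y i))
              + (t : ℂ) ^ 2 * (c * (starRingEnd ℂ) c) * ((starRingEnd ℂ) (Y i) * Y i)) := by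
            refine Finset.sum_congr rfl fun i _ => ?_
            simp only [hb, RingHom.map_mul, map_sub, Complex.conj_conj, Complex.conj_ofReal]
            ring
        _ = (t : ℂ) ^ 2 * (∑ i, (starRingEnd ℂ) (X i) * X i)
              - (t : ℂ) ^ 2 * (starRingEnd ℂ) c * (∑ i, X i * Y i)
              - (t : ℂ) ^ 2 * c * (∑ i, (starRingEnd ℂ) (X i) * (starRingEnd ℂ) (Y i))
              + (t : ℂ) ^ 2 * (c * (starRingEnd ℂ) c) * (∑ i, (starRingEnd ℂ) (Y i) * Y i) := by
            rw [Finset.sum_add_distrib, Finset.sum_sub_distrib, Finset.sum_sub_distrib,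
              Finset.mul_sum, Finset.mul_sum, Finset.mul_sum, Finset.mul_sum]
        _ = 1 := by
            rw [hxx, hXYb, hXYc2, hyy]
            have h2 : ((t : ℝ) : ℂ) ^ 2 * (s : ℂ) = 1 := by
              rw [← hts2]; push_cast; ring
            linear_combination ((t : ℂ) ^ 2) * hSc + h2
    set R : Matrix (Fin n) (Fin n) ℂ := vecMulVec Y b - vecMulVec b Y with hR
    refine ⟨R, ?_, ?_, ?_⟩
    · ext i j
      simp only [hR, Matrix.transpose_apply, Matrix.sub_apply, Matrix.neg_apply,
        Matrix.vecMulVec_apply]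
      ring
    · rw [specNorm]
      refine ContinuousLinearMap.opNorm_le_bound _ zero_le_one fun v => ?_
      rw [one_mul]
      set V : Fin n → ℂ := WithLp.equiv 2 (Fin n → ℂ) v with hV
      set α : ℂ := ∑ j, b j * V j with hα
      set β : ℂ := ∑ j, Y j * V j with hβ
      set bE : EuclideanSpace ℂ (Fin n) := (WithLp.equiv 2 (Fin n → ℂ)).symm b with hbE
      -- the image vector
      have hTv : Matrix.toEuclideanCLM (𝕜 := ℂ) R v = α • y - β • bE := by
        apply (WithLp.equiv 2 (Fin n → ℂ)).injective
        change Matrix.toLin' R (WithLp.equiv 2 (Fin n → ℂ) v) = WithLp.equiv 2 (Fin n → ℂ) (α • y - β • bE)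
        funext i
        have h1 : Matrix.toLin' R (WithLp.equiv 2 (Fin n → ℂ) v) i = ∑ j, R i j * V j := by
          rw [Matrix.toLin'_apply]; rfl
        have h2 : WithLp.equiv 2 (Fin n → ℂ) (α • y - β • bE) i = α * Y i - β * b i := rfl
        rw [h1, h2]
        calc ∑ j, R i j * V j
            = ∑ j, (Y i * (b j * V j) - b i * (Y j * V j)) := by
              refine Finset.sum_congr rfl fun j _ => ?_
              simp only [hR, Matrix.sub_apply, Matrix.vecMulVec_apply]
              ring
          _ = Y i * ∑ j, b j * V j - b i * ∑ j, Y j * V j := by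
              rw [Finset.sum_sub_distrib, ← Finset.mul_sum, ← Finset.mul_sum]
          _ = α * Y i - β * b i := by rw [hα, hβ]; ring
      have hybE : (inner ℂ y bE : ℂ) = 0 := by
        rw [PiLp.inner_apply, ← hS3]
        exact Finset.sum_congr rfl fun i _ => by simp [hY, hbE, mul_comm]
      have hbEnorm : ‖bE‖ = 1 := by
        have h1 : (inner ℂ bE bE : ℂ) = 1 := by
          rw [PiLp.inner_apply, ← hbb]
          refine Finset.sum_congr rfl fun i _ => ?_
          simp [hbE, Complex.conj_mul']
        have h2 := inner_self_eq_norm_sq_to_K (𝕜 := ℂ) bE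
        rw [h1] at h2
        have h4 : ‖bE‖ = 1 ∨ ((‖bE‖ : ℝ) : ℂ) = -1 := by simpa using h2.symm
        rcases h4 with h4 | h4
        · exact h4
        · have h5 : (‖bE‖ : ℝ) = -1 := by exact_mod_cast h4
          nlinarith [norm_nonneg bE]
      have hnormsq : ‖Matrix.toEuclideanCLM (𝕜 := ℂ) R v‖ ^ 2 = ‖α‖ ^ 2 + ‖β‖ ^ 2 := by
        rw [hTv, @norm_sub_sq ℂ, inner_smul_left, inner_smul_right, hybE]
        simp only [norm_smul, hy, hbEnorm, mul_one, mul_zero, map_zero, Complex.zero_re]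
        ring
      -- Bessel
      set P : EuclideanSpace ℂ (Fin n) := (WithLp.equiv 2 (Fin n → ℂ)).symm (star b) with hP
      set Q : EuclideanSpace ℂ (Fin n) := (WithLp.equiv 2 (Fin n → ℂ)).symm (star Y) with hQ
      have hPv : (inner ℂ P v : ℂ) = α := by
        rw [PiLp.inner_apply, hα]
        refine Finset.sum_congr rfl fun j _ => ?_
        simp [hP, hV, mul_comm]
      have hQv : (inner ℂ Q v : ℂ) = β := by
        rw [PiLp.inner_apply, hβ]
        refine Finset.sum_congr rfl fun j _ => ?_
        simp [hQ, hV, mul_comm]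
      have hPP : (inner ℂ P P : ℂ) = 1 := by
        rw [PiLp.inner_apply, ← hbb]
        refine Finset.sum_congr rfl fun i _ => ?_
        simp [hP, Complex.conj_mul']
      have hQQ : (inner ℂ Q Q : ℂ) = 1 := by
        rw [PiLp.inner_apply, ← hyy]
        refine Finset.sum_congr rfl fun i _ => ?_
        simp [hQ, Complex.conj_mul']
      have hPQ : (inner ℂ P Q : ℂ) = 0 := by
        rw [PiLp.inner_apply, ← hS3]
        refine Finset.sum_congr rfl fun i _ => ?_
        simp [hP, hQ, mul_comm]
      have hQP : (inner ℂ Q P : ℂ) = 0 := by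
        rw [← inner_conj_symm, hPQ, map_zero]
      have ho : Orthonormal ℂ ![P, Q] := by
        rw [orthonormal_iff_ite]
        intro i j
        fin_cases i <;> fin_cases j <;>
          simp [hPP, hQQ, hPQ, hQP, -inner_self_eq_norm_sq_to_K]
      have hbessel := ho.sum_inner_products_le (s := Finset.univ) v
      rw [Fin.sum_univ_two] at hbessel
      simp only [Matrix.cons_val_zero, Matrix.cons_val_one, Matrix.head_cons] at hbessel
      rw [hPv, hQv] at hbessel
      have h4 : ‖Matrix.toEuclideanCLM (𝕜 := ℂ) R v‖ ^ 2 ≤ ‖v‖ ^ 2 := by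
        rw [hnormsq]; exact hbessel
      have h5 := Real.sqrt_le_sqrt h4
      rwa [Real.sqrt_sq (norm_nonneg _), Real.sqrt_sq (norm_nonneg _)] at h5
    · calc star Y ⬝ᵥ R.mulVec X
          = ∑ i, ∑ j, ((starRingEnd ℂ) (Y i) * Y i * (b j * X j)
              - (starRingEnd ℂ) (Y i) * b i * (Y j * X j)) := by
            rw [dotProduct]
            refine Finset.sum_congr rfl fun i _ => ?_
            have hmv : R.mulVec X i = ∑ j, R i j * X j := rfl
            rw [hmv, Finset.mul_sum]
            refine Finset.sum_congr rfl fun j _ => ?_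
            simp only [hR, Matrix.sub_apply, Matrix.vecMulVec_apply, Pi.star_apply,
              Complex.star_def]
            ring
        _ = ∑ i, ((starRingEnd ℂ) (Y i) * Y i * (∑ j, b j * X j)
              - (starRingEnd ℂ) (Y i) * b i * (∑ j, Y j * X j)) := by
            refine Finset.sum_congr rfl fun i _ => ?_
            rw [Finset.sum_sub_distrib, ← Finset.mul_sum, ← Finset.mul_sum]
        _ = (∑ i, (starRingEnd ℂ) (Y i) * Y i) * (∑ j, b j * X j)
              - (∑ i, (starRingEnd ℂ) (Y i) * b i) * (∑ j, Y j * X j) := by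
            rw [Finset.sum_sub_distrib, ← Finset.sum_mul, ← Finset.sum_mul]
        _ = (Real.sqrt s : ℂ) := by rw [hyy, hS2, hS3]; ring
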